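/- Two continuous maps f, g : ℝ/ℤ → ℝ/ℤ with the same degree are homotopic; moreover the map F(t,x) = t·f̄(x) + (1−t)·ḡ(x) mod 1, where f̄ and ḡ are lifts of f and g, descends to a well-defined continuous homotopy F : [0,1] × ℝ/ℤ → ℝ/ℤ from g to f. -/

import Mathlib

/-- A continuous real function whose "period defect" is integer-valued has constant defect. -/
lemma defect_const (h : ℝ → ℝ) (hc : Continuous h)
    (hint : ∀ x : ℝ, ∃ n : ℤ, h (x + 1) - h x = n) :
    ∀ x : ℝ, h (x + 1) - h x = h (0 + 1) - h 0 := by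
  set a : ℝ → ℝ := fun x => h (x + 1) - h x with ha
  have hac : Continuous a := (hc.comp (continuous_id.add continuous_const)).sub hc
  have hlc : IsLocallyConstant a := by
    rw [IsLocallyConstant.iff_eventually_eq]
    intro x
    have hev : ∀ᶠ y in nhds x, |a y - a x| < 1 := by
      have ht : Filter.Tendsto (fun y => |a y - a x|) (nhds x) (nhds |a x - a x|) :=
        ((hac.sub continuous_const).abs).tendsto x
      simp only [sub_self, abs_zero] at ht
      exact ht.eventually_lt_const one_pos
    filter_upwards [hev] with y hy
    obtain ⟨n, hn⟩ := hint y
    obtain ⟨m, hm⟩ := hint x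
    simp only [a] at hy ⊢
    rw [hn, hm] at hy ⊢
    have h1 : |((n - m : ℤ) : ℝ)| < 1 := by push_cast; exact hy
    have h2 : |n - m| < 1 := by exact_mod_cast h1
    have h3 := Int.abs_lt_one_iff.mp h2
    have : n = m := by omega
    rw [this]
  intro x
  exact hlc.apply_eq_of_preconnectedSpace x 0

/-- Two continuous circle maps with the same degree are homotopic, via the homotopy
`F(t,x) = t·f̄(x) + (1-t)·ḡ(x) mod 1`. -/
theorem stmt2 (f g : AddCircle (1:ℝ) → AddCircle (1:ℝ)) (hf : Continuous f) (hg : Continuous g)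
    (fbar gbar : ℝ → ℝ) (hfc : Continuous fbar) (hgc : Continuous gbar)
    (hflift : ∀ x : ℝ, ((fbar x : ℝ) : AddCircle (1:ℝ)) = f ((x : ℝ) : AddCircle (1:ℝ)))
    (hglift : ∀ x : ℝ, ((gbar x : ℝ) : AddCircle (1:ℝ)) = g ((x : ℝ) : AddCircle (1:ℝ)))
    (hdeg : fbar 1 - fbar 0 = gbar 1 - gbar 0) :
    ∃ F : unitInterval × AddCircle (1:ℝ) → AddCircle (1:ℝ),
      Continuous F ∧ (∀ x, F (0, x) = g x) ∧ (∀ x, F (1, x) = f x) ∧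
      ∀ (t : unitInterval) (x : ℝ),
        F (t, ((x : ℝ) : AddCircle (1:ℝ))) =
          ((((t : ℝ) * fbar x + (1 - (t : ℝ)) * gbar x : ℝ)) : AddCircle (1:ℝ)) := by
  -- the coercion ℝ → AddCircle 1 kills integers
  have hker : ∀ n : ℤ, (((n : ℝ)) : AddCircle (1:ℝ)) = 0 := by
    intro n
    rw [AddCircle.coe_eq_zero_iff]
    exact ⟨n, by simp⟩
  have hcoe_add_int : ∀ (x : ℝ) (n : ℤ), (((x + n : ℝ)) : AddCircle (1:ℝ)) = (x : AddCircle (1:ℝ)) := by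
    intro x n
    rw [QuotientAddGroup.mk_add, hker, add_zero]
  -- the defect of a lift is an integer
  have hint : ∀ (h : ℝ → ℝ) (φ : AddCircle (1:ℝ) → AddCircle (1:ℝ)),
      (∀ x : ℝ, ((h x : ℝ) : AddCircle (1:ℝ)) = φ ((x : ℝ) : AddCircle (1:ℝ))) →
      ∀ x : ℝ, ∃ n : ℤ, h (x + 1) - h x = n := by
    intro h φ hl x
    have h0 : ((h (x + 1) - h x : ℝ) : AddCircle (1:ℝ)) = 0 := by
      rw [QuotientAddGroup.mk_sub, hl, hl]
      have : ((x + (1:ℤ) : ℝ) : AddCircle (1:ℝ)) = (x : AddCircle (1:ℝ)) := hcoe_add_int x 1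
      push_cast at this
      rw [this, sub_self]
    rw [AddCircle.coe_eq_zero_iff] at h0
    obtain ⟨n, hn⟩ := h0
    exact ⟨n, by simpa using hn.symm⟩
  have hfd := defect_const fbar hfc (hint fbar f hflift)
  have hgd := defect_const gbar hgc (hint gbar g hglift)
  simp only [zero_add] at hfd hgd
  set c : ℝ := fbar 1 - fbar 0 with hc
  -- translation by an integer
  have hshift : ∀ (h : ℝ → ℝ), (∀ x : ℝ, h (x + 1) - h x = c) →
      ∀ (x : ℝ) (n : ℤ), h (x + n) = h x + n * c := by
    intro h hp x n
    induction n using Int.induction_on with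
    | zero => simp
    | succ k ih =>
        have h2 := hp (x + (k : ℝ))
        push_cast at ih ⊢
        rw [show x + ((k:ℝ) + 1) = x + (k:ℝ) + 1 by ring]
        linarith
    | pred k ih =>
        have h2 := hp (x + -(k:ℝ) - 1)
        rw [show x + -(k:ℝ) - 1 + 1 = x + -(k:ℝ) by ring] at h2
        push_cast at ih ⊢
        rw [show x + (-(k:ℝ) - 1) = x + -(k:ℝ) - 1 by ring]
        linarith
  have hfsh := hshift fbar hfd
  have hgsh := hshift gbar (by intro x; rw [hgd x, ← hdeg])
  -- c is an integer
  obtain ⟨m, hm⟩ : ∃ m : ℤ, c = m := by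
    obtain ⟨n, hn⟩ := hint fbar f hflift 0
    exact ⟨n, by rw [hc]; simpa using hn⟩
  -- the unquotiented homotopy
  set H : unitInterval × ℝ → AddCircle (1:ℝ) :=
    fun p => (((p.1 : ℝ) * fbar p.2 + (1 - (p.1 : ℝ)) * gbar p.2 : ℝ) : AddCircle (1:ℝ)) with hH
  have hHc : Continuous H := by
    apply Continuous.comp (continuous_quotient_mk')
    exact ((continuous_subtype_val.comp continuous_fst).mul (hfc.comp continuous_snd)).add
      (((continuous_const.sub (continuous_subtype_val.comp continuous_fst))).mul
        (hgc.comp continuous_snd))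
  -- H is invariant under integer translation in the second variable
  have hHinv : ∀ (t : unitInterval) (x : ℝ) (n : ℤ), H (t, x + n) = H (t, x) := by
    intro t x n
    simp only [hH]
    rw [hfsh x n, hgsh x n]
    have e : (t : ℝ) * (fbar x + n * c) + (1 - (t : ℝ)) * (gbar x + n * c)
        = ((t : ℝ) * fbar x + (1 - (t : ℝ)) * gbar x) + (n * m : ℤ) := by
      push_cast [← hm]; ring
    rw [e, hcoe_add_int]
  -- H respects the quotient
  have hwd : ∀ (t : unitInterval) (x y : ℝ),
      (x : AddCircle (1:ℝ)) = (y : AddCircle (1:ℝ)) → H (t, x) = H (t, y) := by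
    intro t x y hxy
    have h0 : ((y - x : ℝ) : AddCircle (1:ℝ)) = 0 := by
      rw [QuotientAddGroup.mk_sub, ← hxy, sub_self]
    rw [AddCircle.coe_eq_zero_iff] at h0
    obtain ⟨n, hn⟩ := h0
    have hy : y = x + n := by simp at hn; linarith
    rw [hy, hHinv]
  -- define F by choosing representatives
  refine ⟨fun y => H (y.1, (Quotient.out y.2 : ℝ)), ?_, ?_, ?_, ?_⟩
  · -- continuity via the open quotient map
    have hq : IsOpenQuotientMap (Prod.map (id : unitInterval → unitInterval)
        (QuotientAddGroup.mk : ℝ → AddCircle (1:ℝ))) :=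
      IsOpenQuotientMap.id.prodMap QuotientAddGroup.isOpenQuotientMap_mk
    rw [← hq.continuous_comp_iff]
    have : (fun y : unitInterval × AddCircle (1:ℝ) => H (y.1, (Quotient.out y.2 : ℝ))) ∘
        (Prod.map id QuotientAddGroup.mk) = H := by
      funext p
      exact hwd p.1 (Quotient.out ((p.2 : ℝ) : AddCircle (1:ℝ))) p.2 (Quotient.out_eq' _)
    rw [this]
    exact hHc
  · -- F 0 = g
    intro x
    simp only [hH]
    rw [show ((0 : unitInterval) : ℝ) = 0 from rfl]
    simp only [zero_mul, zero_add, sub_zero, one_mul]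
    rw [hglift]
    congr 1
    exact Quotient.out_eq' x
  · -- F 1 = f
    intro x
    simp only [hH]
    rw [show ((1 : unitInterval) : ℝ) = 1 from rfl]
    simp only [one_mul, sub_self, zero_mul, add_zero]
    rw [hflift]
    congr 1
    exact Quotient.out_eq' x
  · -- formula
    intro t x
    exact hwd t (Quotient.out ((x : ℝ) : AddCircle (1:ℝ))) x (Quotient.out_eq' _)
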